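/- arXiv:1905.00731 — 6 statements merged into one kernel-verified Lean document; each statement's English description precedes it below -/
import Mathlib

section
/- For all z1, z2 ≥ 0, the ratio (z1² + 4z1z2 + 3z1 + 4z2² + 6z2 + 2)/(z1² + 4z1z2 + 2z1 + 5z2² + 6z2 + 2) is at least 4/5. -/
theorem stmt_0 (z1 z2 : ℝ) (hz1 : 0 ≤ z1) (hz2 : 0 ≤ z2) :
    (4 : ℝ) / 5 ≤
      (z1^2 + 4*z1*z2 + 3*z1 + 4*z2^2 + 6*z2 + 2) /
      (z1^2 + 4*z1*z2 + 2*z1 + 5*z2^2 + 6*z2 + 2) := by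
  rw [div_le_div_iff₀ (by norm_num) (by nlinarith)]
  nlinarith
end

section
/- For all z1, z2 ≥ 0 with z1 ≤ z2², the partial derivative of R(z1,z2) = (z1²+4z1z2+3z1+4z2²+6z2+2)/(z1²+4z1z2+2z1+5z2²+6z2+2) with respect to z1 is nonnegative. -/
theorem stmt_3 (z1 z2 : ℝ) (hz1 : 0 ≤ z1) (hz2 : 0 ≤ z2) (h : z1 ≤ z2^2) :
    0 ≤ deriv (fun z : ℝ =>
      (z^2 + 4*z*z2 + 3*z + 4*z2^2 + 6*z2 + 2) /
      (z^2 + 4*z*z2 + 2*z + 5*z2^2 + 6*z2 + 2)) z1 := by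
  have hN : HasDerivAt (fun z : ℝ => z^2 + 4*z*z2 + 3*z + 4*z2^2 + 6*z2 + 2)
      (2*z1 + 4*z2 + 3) z1 := by
    have h1 : HasDerivAt (fun z : ℝ => z^2) (2*z1) z1 := by
      simpa using hasDerivAt_pow 2 z1
    have h2 : HasDerivAt (fun z : ℝ => 4*z*z2) (4*z2) z1 := by
      have := (hasDerivAt_id z1).const_mul (4*z2)
      convert this using 1
      · rfl
      · rfl
      · funext x; simp [id]; ring
      · simp
    have h3 : HasDerivAt (fun z : ℝ => 3*z) 3 z1 := by
      simpa using (hasDerivAt_id z1).const_mul (3:ℝ)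
    have h4 : HasDerivAt (fun _ : ℝ => 4*z2^2 + 6*z2 + 2) 0 z1 := hasDerivAt_const _ _
    convert ((h1.add h2).add h3).add h4 using 1
    · rfl
    · rfl
    · funext x; simp only [Pi.add_apply]; ring
    · ring
  have hD : HasDerivAt (fun z : ℝ => z^2 + 4*z*z2 + 2*z + 5*z2^2 + 6*z2 + 2)
      (2*z1 + 4*z2 + 2) z1 := by
    have h1 : HasDerivAt (fun z : ℝ => z^2) (2*z1) z1 := by
      simpa using hasDerivAt_pow 2 z1
    have h2 : HasDerivAt (fun z : ℝ => 4*z*z2) (4*z2) z1 := by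
      have := (hasDerivAt_id z1).const_mul (4*z2)
      convert this using 1
      · rfl
      · rfl
      · funext x; simp [id]; ring
      · simp
    have h3 : HasDerivAt (fun z : ℝ => 2*z) 2 z1 := by
      simpa using (hasDerivAt_id z1).const_mul (2:ℝ)
    have h4 : HasDerivAt (fun _ : ℝ => 5*z2^2 + 6*z2 + 2) 0 z1 := hasDerivAt_const _ _
    convert ((h1.add h2).add h3).add h4 using 1
    · rfl
    · rfl
    · funext x; simp only [Pi.add_apply]; ring
    · ring
  have hDpos : 0 < z1^2 + 4*z1*z2 + 2*z1 + 5*z2^2 + 6*z2 + 2 := by nlinarith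
  have hq := hN.div hD (ne_of_gt hDpos)
  erw [hq.deriv]
  apply div_nonneg
  · nlinarith [sq_nonneg z2, sq_nonneg z1, mul_nonneg hz1 hz2]
  · positivity
end

section
/- If 0 ≤ z2 ≤ (√7 − 1)/3 and z1 ≥ 0, then R(z1,z2) = (z1²+4z1z2+3z1+4z2²+6z2+2)/(z1²+4z1z2+2z1+5z2²+6z2+2) ≥ R(0, (√7−1)/3) > 0.955. -/
theorem stmt_5 (z1 z2 : ℝ) (hz1 : 0 ≤ z1) (hz2 : 0 ≤ z2)
    (hz2' : z2 ≤ (Real.sqrt 7 - 1) / 3) :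
    let R : ℝ → ℝ → ℝ := fun a b =>
      (a^2 + 4*a*b + 3*a + 4*b^2 + 6*b + 2) /
      (a^2 + 4*a*b + 2*a + 5*b^2 + 6*b + 2)
    R 0 ((Real.sqrt 7 - 1) / 3) ≤ R z1 z2 ∧ (0.955 : ℝ) < R 0 ((Real.sqrt 7 - 1) / 3) := by
  intro R
  set t := Real.sqrt 7 with ht
  have ht2 : t^2 = 7 := Real.sq_sqrt (by norm_num)
  have htlb : 2.645 ≤ t := by
    nlinarith [Real.sqrt_nonneg 7, ht2]
  have htub : t ≤ 2.646 := by
    nlinarith [Real.sqrt_nonneg 7, ht2]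
  set s : ℝ := (t - 1) / 3 with hs
  have hs0 : 0 ≤ s := by rw [hs]; linarith
  have hd1 : (0:ℝ) < z1^2 + 4*z1*z2 + 2*z1 + 5*z2^2 + 6*z2 + 2 := by nlinarith [sq_nonneg s, sq_nonneg z1, sq_nonneg z2, mul_nonneg hz1 hz2]
  have hd2 : (0:ℝ) < (0:ℝ)^2 + 4*0*s + 2*0 + 5*s^2 + 6*s + 2 := by nlinarith [sq_nonneg s, sq_nonneg z1, sq_nonneg z2, mul_nonneg hz1 hz2]
  constructor
  · show _ / _ ≤ _ / _
    rw [div_le_div_iff₀ hd2 hd1]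
    nlinarith [sq_nonneg z1, sq_nonneg (z1*z2), sq_nonneg (z1*(s - z2)),
      mul_nonneg hz1 (sub_nonneg.2 hz2'), mul_nonneg hz2 (sub_nonneg.2 hz2'),
      mul_nonneg (mul_nonneg hz2 hz2) (sub_nonneg.2 hz2'), ht2,
      mul_nonneg hz1 hz2, mul_nonneg hz1 hz1, sq_nonneg (s - z2), hs0,
      mul_nonneg (mul_nonneg hz1 hz2) (sub_nonneg.2 hz2')]
  · show (0.955:ℝ) < _ / _
    rw [lt_div_iff₀ hd2]
    nlinarith [ht2]
end

section
/- For all β ≥ 0 and z2 ≥ (√7−1)/3, the function G(β,z2) = (z2²+z2+1−√((1+β)z2²+2(1+β)z2+1))/((3+β)z2²+(2β+4)z2+2z2√((1+β)z2²+2(1+β)z2+1)+2) satisfies G(β,z2) ≤ 0.0433, provided z2 ≤ √(2β). -/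
private lemma aux_z6 (z : ℝ) (h1 : (0.548:ℝ) ≤ z)
    (h : 0 < (4567/5000:ℝ) + (2067/2500)*z + (8701/10000)*z^2 + (-433/10000)*z^3 + (-433/20000)*z^4) :
    z ≤ 6 := by
  by_contra hc
  push_neg at hc
  nlinarith [sq_nonneg (z-6), mul_nonneg (by linarith : (0:ℝ) ≤ z-6) (sq_nonneg z),
    mul_nonneg (mul_nonneg (by linarith : (0:ℝ) ≤ z-6) (by linarith : (0:ℝ) ≤ z))
      (by linarith : (0:ℝ) ≤ z), sq_nonneg (z*(z-6))]

private lemma aux_Q (z : ℝ) (h1 : (0.548:ℝ) ≤ z) (h2 : z ≤ 6) :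
    0 ≤ (4142511/25000000 : ℝ) + (4142511/6250000)*z + (-11489967/12500000)*z^2 +
      (-857489/5000000)*z^3 + (695533/20000000)*z^4 + (10262533/50000000)*z^5 +
      (1977511/50000000)*z^6 + (-187489/100000000)*z^7 + (-187489/400000000)*z^8 := by
  nlinarith [sq_nonneg (z - 1.087), sq_nonneg (z^2 - 1.182),
    mul_nonneg (sub_nonneg.2 h1) (sub_nonneg.2 h2),
    mul_nonneg (mul_nonneg (sub_nonneg.2 h1) (sub_nonneg.2 h2)) (sq_nonneg (z-1.087)),
    mul_nonneg (sub_nonneg.2 h1) (sq_nonneg (z-1.087)),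
    mul_nonneg (sub_nonneg.2 h2) (sq_nonneg (z-1.087)),
    sq_nonneg ((z-1.087)*(z-0.548)), sq_nonneg ((z-1.087)*(6-z))]

private lemma aux_R (z : ℝ) (h1 : (0.548:ℝ) ≤ z) (h2 : z ≤ 6) :
    0 ≤ (51977511/25000000:ℝ)*z + (14575511/10000000)*z^2 + (14967511/50000000)*z^3 +
      (4142511/100000000)*z^4 + (-187489/50000000)*z^5 + (-187489/200000000)*z^6 := by
  nlinarith [mul_nonneg (by linarith : (0:ℝ) ≤ z) (sub_nonneg.2 h2),
    mul_nonneg (mul_nonneg (by linarith : (0:ℝ) ≤ z) (by linarith : (0:ℝ) ≤ z)) (sub_nonneg.2 h2),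
    mul_nonneg (sq_nonneg (z*z)) (mul_nonneg (by linarith : (0:ℝ) ≤ z) (sub_nonneg.2 h2)),
    mul_nonneg (mul_nonneg (sq_nonneg z) (by linarith : (0:ℝ) ≤ z)) (sub_nonneg.2 h2),
    mul_nonneg (sq_nonneg (z*z)) (sub_nonneg.2 h2)]

private lemma aux_cert (b z : ℝ) (h1 : (0.548:ℝ) ≤ z) (ht : 0 ≤ b - z^2/2)
    (h : 0 < z^2 + z + 1 - 0.0433*((3+b)*z^2 + (2*b+4)*z + 2)) :
    (z^2 + z + 1 - 0.0433*((3+b)*z^2 + (2*b+4)*z + 2))^2 ≤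
      (1 + 0.0866*z)^2 * ((1+b)*z^2 + 2*(1+b)*z + 1) := by
  have hw : (0:ℝ) ≤ z^2 + 2*z := by nlinarith
  have hNb0 : (0:ℝ) < (4567/5000:ℝ) + (2067/2500)*z + (8701/10000)*z^2 +
      (-433/10000)*z^3 + (-433/20000)*z^4 := by
    nlinarith [mul_nonneg ht hw]
  have hz6 : z ≤ 6 := aux_z6 z h1 hNb0
  nlinarith [aux_Q z h1 hz6, mul_nonneg (aux_R z h1 hz6) ht, mul_nonneg (mul_nonneg hw ht) h.le]

theorem stmt_7 (β z2 : ℝ) (hβ : 0 ≤ β) (hz2 : (Real.sqrt 7 - 1) / 3 ≤ z2)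
    (hub : z2 ≤ Real.sqrt (2*β)) :
    (z2^2 + z2 + 1 - Real.sqrt ((1+β)*z2^2 + 2*(1+β)*z2 + 1)) /
      ((3+β)*z2^2 + (2*β+4)*z2 + 2*z2*Real.sqrt ((1+β)*z2^2 + 2*(1+β)*z2 + 1) + 2)
      ≤ 0.0433 := by
  have h7 : (2.645:ℝ) ≤ Real.sqrt 7 := by
    nlinarith [Real.sq_sqrt (by norm_num : (7:ℝ) ≥ 0), Real.sqrt_nonneg 7]
  have hz : (0.548:ℝ) ≤ z2 := by linarith
  have hzpos : 0 < z2 := by linarith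
  have hb2 : z2^2 ≤ 2*β := by
    have h := Real.sq_sqrt (by linarith : (0:ℝ) ≤ 2*β)
    nlinarith [Real.sqrt_nonneg (2*β)]
  have hA : 0 ≤ (1+β)*z2^2 + 2*(1+β)*z2 + 1 := by nlinarith
  set s := Real.sqrt ((1+β)*z2^2 + 2*(1+β)*z2 + 1) with hsdef
  have hs0 : 0 ≤ s := Real.sqrt_nonneg _
  have hs2 : s^2 = (1+β)*z2^2 + 2*(1+β)*z2 + 1 := Real.sq_sqrt hA
  have hD : 0 < (3+β)*z2^2 + (2*β+4)*z2 + 2*z2*s + 2 := by nlinarith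
  rw [div_le_iff₀ hD]
  have hc : (0:ℝ) ≤ 1 + 0.0866*z2 := by linarith
  have key : z2^2 + z2 + 1 - 0.0433*((3+β)*z2^2 + (2*β+4)*z2 + 2) ≤ (1 + 0.0866*z2)*s := by
    rcases le_or_gt (z2^2 + z2 + 1 - 0.0433*((3+β)*z2^2 + (2*β+4)*z2 + 2)) 0 with h | h
    · exact le_trans h (mul_nonneg hc hs0)
    · have hP := aux_cert β z2 hz (by linarith) h
      calc z2^2 + z2 + 1 - 0.0433*((3+β)*z2^2 + (2*β+4)*z2 + 2)
          = Real.sqrt ((z2^2 + z2 + 1 - 0.0433*((3+β)*z2^2 + (2*β+4)*z2 + 2))^2) :=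
            (Real.sqrt_sq h.le).symm
        _ ≤ Real.sqrt (((1 + 0.0866*z2)*s)^2) := by
            apply Real.sqrt_le_sqrt
            rw [mul_pow, hs2]; exact hP
        _ = (1 + 0.0866*z2)*s := Real.sqrt_sq (mul_nonneg hc hs0)
  nlinarith [key]
end

section
/- For β ≥ 0 and z2 ≥ (√7−1)/3, the partial derivative of G(β,z2) with respect to z2 is nonnegative, where G(β,z2) = (z2²+z2+1−A)/((3+β)z2²+(2β+4)z2+2z2·A+2) with A = √((1+β)z2²+2(1+β)z2+1). -/
theorem stmt_8 (β z2 : ℝ) (hβ : 0 ≤ β) (hz2 : (Real.sqrt 7 - 1) / 3 ≤ z2) :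
    0 ≤ deriv (fun z : ℝ =>
      (z^2 + z + 1 - Real.sqrt ((1+β)*z^2 + 2*(1+β)*z + 1)) /
      ((3+β)*z^2 + (2*β+4)*z + 2*z*Real.sqrt ((1+β)*z^2 + 2*(1+β)*z + 1) + 2)) z2 := by
  have h7 : (2:ℝ) ≤ Real.sqrt 7 := by
    nlinarith [Real.sq_sqrt (by norm_num : (0:ℝ) ≤ 7), Real.sqrt_nonneg 7]
  have hzpos : 0 < z2 := by linarith
  have hcoef : 0 ≤ 3*z2^2 + 2*z2 - 2 := by
    have h1 : Real.sqrt 7 ≤ 3*z2 + 1 := by linarith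
    nlinarith [Real.sq_sqrt (by norm_num : (0:ℝ) ≤ 7), Real.sqrt_nonneg 7]
  have hupos : 0 < (1+β)*z2^2 + 2*(1+β)*z2 + 1 := by nlinarith
  set A := Real.sqrt ((1+β)*z2^2 + 2*(1+β)*z2 + 1) with hA
  have hA2 : A^2 = (1+β)*z2^2 + 2*(1+β)*z2 + 1 := Real.sq_sqrt hupos.le
  have hAnn : 0 ≤ A := Real.sqrt_nonneg _
  have hA1 : 1 ≤ A := by nlinarith [hA2]
  have hApos : (0:ℝ) < A := lt_of_lt_of_le one_pos hA1
  -- derivative of u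
  have hu' : HasDerivAt (fun z : ℝ => (1+β)*z^2 + 2*(1+β)*z + 1)
      (2*(1+β)*z2 + 2*(1+β)) z2 := by
    have h := (((hasDerivAt_pow 2 z2).const_mul (1+β)).add
      ((hasDerivAt_id z2).const_mul (2*(1+β)))).add_const 1
    refine h.congr_deriv ?_
    push_cast; ring
  have hs' : HasDerivAt (fun z : ℝ => Real.sqrt ((1+β)*z^2 + 2*(1+β)*z + 1))
      ((2*(1+β)*z2 + 2*(1+β)) / (2*A)) z2 := hu'.sqrt (ne_of_gt hupos)
  -- numerator
  have hN' : HasDerivAt (fun z : ℝ => z^2 + z + 1 - Real.sqrt ((1+β)*z^2 + 2*(1+β)*z + 1))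
      (2*z2 + 1 - (2*(1+β)*z2 + 2*(1+β)) / (2*A)) z2 := by
    have h := (((hasDerivAt_pow 2 z2).add (hasDerivAt_id z2)).add_const 1).sub hs'
    refine h.congr_deriv ?_
    push_cast; ring
  -- denominator
  have hD' : HasDerivAt (fun z : ℝ =>
      (3+β)*z^2 + (2*β+4)*z + 2*z*Real.sqrt ((1+β)*z^2 + 2*(1+β)*z + 1) + 2)
      ((3+β)*(2*z2) + (2*β+4) + (2*A + 2*z2*((2*(1+β)*z2 + 2*(1+β)) / (2*A)))) z2 := by
    have hm : HasDerivAt (fun z : ℝ => 2*z*Real.sqrt ((1+β)*z^2 + 2*(1+β)*z + 1))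
        (2*A + 2*z2*((2*(1+β)*z2 + 2*(1+β)) / (2*A))) z2 := by
      have h := ((hasDerivAt_id z2).const_mul 2).mul hs'
      refine h.congr_deriv ?_
      simp only [id_eq]
      rw [← hA]
      ring
    have h := ((((hasDerivAt_pow 2 z2).const_mul (3+β)).add
      ((hasDerivAt_id z2).const_mul (2*β+4))).add hm).add_const 2
    refine h.congr_deriv ?_
    push_cast; ring
  have hDpos : (0:ℝ) < (3+β)*z2^2 + (2*β+4)*z2 + 2*z2*A + 2 := by nlinarith
  have hf := hN'.div hD' (ne_of_gt hDpos)
  erw [hf.deriv]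
  apply div_nonneg _ (sq_nonneg _)
  have key : (2*z2 + 1 - (2*(1+β)*z2 + 2*(1+β)) / (2*A)) *
        ((3+β)*z2^2 + (2*β+4)*z2 + 2*z2*A + 2) -
      (z2^2 + z2 + 1 - A) *
        ((3+β)*(2*z2) + (2*β+4) + (2*A + 2*z2*((2*(1+β)*z2 + 2*(1+β)) / (2*A)))) =
      (2*(z2^3*(3+4*β+β^2) + z2^2*(5+6*β+3*β^2) + 2*z2*(1+β^2)
        + A*(3*z2^2+2*z2) + β*A*(3*z2^2+2*z2-2))) / (2*A) := by
    field_simp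
    linear_combination (2*A + 2*z2^2 + 6*z2 + 2*β*z2 + 2*β + 2) * hA2
  rw [key]
  apply div_nonneg _ (by linarith)
  have h1 : 0 ≤ A*(3*z2^2+2*z2) := by positivity
  have h2 : 0 ≤ β*A*(3*z2^2+2*z2-2) := by positivity
  nlinarith [h1, h2, mul_nonneg hzpos.le (sq_nonneg β),
    mul_nonneg (mul_nonneg hzpos.le hzpos.le) (sq_nonneg β),
    mul_nonneg (mul_nonneg (mul_nonneg hzpos.le hzpos.le) hzpos.le) (sq_nonneg β),
    mul_nonneg (mul_nonneg (mul_nonneg hzpos.le hzpos.le) hzpos.le) hβ,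
    mul_nonneg (mul_nonneg hzpos.le hzpos.le) hβ,
    mul_nonneg hzpos.le hβ]
end

section
/- With the notation z_i = Π_{j=i}^C (λ_j/μ) for nondecreasing nonnegative λ_j, a_i = C!/(C−i)!, x = Σ_{k=1}^C a_k z_{k+1}, y = Σ_{k=2}^C a_k z_k, it holds that y·(a_1 z_1 + y) ≥ a_2·z_1·x. -/
theorem stmt_16 (C : ℕ) (hC : 2 ≤ C) (lam : ℕ → ℝ) (μ : ℝ) (hμ : 0 < μ)
    (hnn : ∀ j, 1 ≤ j → j ≤ C → 0 ≤ lam j)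
    (hmono : ∀ i j, 1 ≤ i → i ≤ j → j ≤ C → lam i ≤ lam j)
    (z : ℕ → ℝ) (hz : ∀ i, z i = ∏ j ∈ Finset.Icc i C, (lam j / μ))
    (a : ℕ → ℝ) (ha : ∀ i, a i = (C.descFactorial i : ℝ))
    (x y : ℝ)
    (hx : x = ∑ k ∈ Finset.Icc 1 C, a k * z (k + 1))
    (hy : y = ∑ k ∈ Finset.Icc 2 C, a k * z k) :
    a 2 * z 1 * x ≤ y * (a 1 * z 1 + y) := by
  have hμ' := hμ.le
  have hznn : ∀ i, 1 ≤ i → 0 ≤ z i := by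
    intro i hi
    rw [hz]
    refine Finset.prod_nonneg fun j hj => ?_
    obtain ⟨h1, h2⟩ := Finset.mem_Icc.mp hj
    exact div_nonneg (hnn j (le_trans hi h1) h2) hμ'
  have hann : ∀ k, 0 ≤ a k := fun k => by rw [ha]; positivity
  have hstep : ∀ k, 1 ≤ k → k ≤ C → z k = (lam k / μ) * z (k + 1) := by
    intro k h1 h2
    rw [hz, hz, show Finset.Icc k C = insert k (Finset.Icc (k+1) C) from
      Finset.ext fun m => by simp [Finset.mem_Icc]; omega,
      Finset.prod_insert (by simp)]
  have hz1 : z 1 = (lam 1 / μ) * z 2 := hstep 1 le_rfl (by omega)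
  have hcross : ∀ k, 2 ≤ k → k ≤ C → z 1 * z (k + 1) ≤ z 2 * z k := by
    intro k h2 hk
    rw [hz1, hstep k (by omega) hk]
    have h0 : 0 ≤ z 2 * z (k + 1) :=
      mul_nonneg (hznn 2 (by omega)) (hznn (k+1) (by omega))
    have hd : lam 1 / μ ≤ lam k / μ := by
      gcongr
      exact hmono 1 k le_rfl (by omega) hk
    nlinarith [mul_le_mul_of_nonneg_right hd h0]
  have hy2 : a 2 * z 2 ≤ y := by
    rw [hy]
    refine Finset.single_le_sum (f := fun k => a k * z k) (fun k hk => ?_)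
      (Finset.mem_Icc.mpr ⟨le_rfl, hC⟩)
    obtain ⟨h1, _⟩ := Finset.mem_Icc.mp hk
    exact mul_nonneg (hann k) (hznn k (by omega))
  have hynn : 0 ≤ y := le_trans (mul_nonneg (hann 2) (hznn 2 one_le_two)) hy2
  have hsum : z 1 * x ≤ a 1 * (z 1 * z 2) + z 2 * y := by
    rw [hx, hy, Finset.mul_sum, Finset.mul_sum,
      show Finset.Icc 1 C = insert 1 (Finset.Icc 2 C) from
        Finset.ext fun m => by simp [Finset.mem_Icc]; omega,
      Finset.sum_insert (by simp)]
    have : ∑ k ∈ Finset.Icc 2 C, z 1 * (a k * z (k+1)) ≤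
        ∑ k ∈ Finset.Icc 2 C, z 2 * (a k * z k) := by
      refine Finset.sum_le_sum fun k hk => ?_
      obtain ⟨h1, h2⟩ := Finset.mem_Icc.mp hk
      have := mul_le_mul_of_nonneg_left (hcross k h1 h2) (hann k)
      nlinarith [this]
    nlinarith [this]
  calc a 2 * z 1 * x = a 2 * (z 1 * x) := by ring
    _ ≤ a 2 * (a 1 * (z 1 * z 2) + z 2 * y) := mul_le_mul_of_nonneg_left hsum (hann 2)
    _ = (a 2 * z 2) * (a 1 * z 1 + y) := by ring
    _ ≤ y * (a 1 * z 1 + y) := mul_le_mul_of_nonneg_right hy2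
        (add_nonneg (mul_nonneg (hann 1) (hznn 1 le_rfl)) hynn)
end
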